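/- The polynomial Q_{2n}^n(z_1,...,z_{2n}) = Pf((z_i−z_j)^{-3})∏_{i<j}(z_i−z_j)^3 satisfies the clustering property: setting z_1 = z_2 = Z gives Q_{2n}^n(Z,Z,z_3,...,z_{2n}) = ∏_{k=3}^{2n} (Z − z_k)^6 · Q_{2n−2}^{n−1}(z_3,...,z_{2n}). -/

import Mathlib

/-- The index `2i` among `Fin (2n)`. -/
def lo (n : ℕ) (i : Fin n) : Fin (2 * n) := ⟨2 * i.val, by have := i.isLt; omega⟩

/-- The index `2i+1` among `Fin (2n)`. -/
def hi (n : ℕ) (i : Fin n) : Fin (2 * n) := ⟨2 * i.val + 1, by have := i.isLt; omega⟩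

/-- The Pfaffian of a `2n × 2n` matrix,
`Pf(A) = (1/(2^n n!)) Σ_{σ ∈ S_{2n}} sign(σ) ∏_{i=1}^n A_{σ(2i-1), σ(2i)}`. -/
noncomputable def pfaffian (n : ℕ) (A : Matrix (Fin (2 * n)) (Fin (2 * n)) ℂ) : ℂ :=
  ((2 : ℂ) ^ n * (n.factorial : ℂ))⁻¹ *
    ∑ σ : Equiv.Perm (Fin (2 * n)),
      ((Equiv.Perm.sign σ : ℤ) : ℂ) * ∏ i : Fin n, A (σ (lo n i)) (σ (hi n i))

/-- Canonical representatives of perfect matchings of `{1, …, 2n}`: permutations `σ` with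
`σ(2i-1) < σ(2i)` for each pair and `σ(1) < σ(3) < ⋯ < σ(2n-1)`. -/
def matchingPerms (n : ℕ) : Finset (Equiv.Perm (Fin (2 * n))) :=
  Finset.univ.filter fun σ =>
    (∀ i : Fin n, σ (lo n i) < σ (hi n i)) ∧
    ∀ i j : Fin n, i < j → σ (lo n i) < σ (lo n j)

/-- `Q_{2n}^n`: the sum over perfect matchings of `{1,…,2n}` of the signed product of
`(z_j - z_k)^3` over all pairs `j, k` lying in distinct blocks of the matching
(equivalently `Pf((z_i - z_j)^{-3}) ∏_{i<j} (z_i - z_j)³`; note `Q₂¹ = 1`). -/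
noncomputable def Qn (n : ℕ) (z : Fin (2 * n) → ℂ) : ℂ :=
  ∑ σ ∈ matchingPerms n,
    ((Equiv.Perm.sign σ : ℤ) : ℂ) *
      ∏ p ∈ Finset.univ.filter (fun p : Fin (2 * n) × Fin (2 * n) =>
          p.1 < p.2 ∧ ∀ r : Fin n, ¬(σ (lo n r) = p.1 ∧ σ (hi n r) = p.2)),
        (z p.1 - z p.2) ^ 3

/-- The vector `(Z, Z, z₁, …, z_{2n})` obtained by setting the first two coordinates equal. -/
noncomputable def clust (n : ℕ) (Z : ℂ) (z : Fin (2 * n) → ℂ) : Fin (2 * (n + 1)) → ℂ :=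
  fun i => if h : i.val < 2 then Z else z ⟨i.val - 2, by have := i.isLt; omega⟩

/- ### auxiliary -/

def shiftE (n : ℕ) : Fin 2 ⊕ Fin (2*n) ≃ Fin (2*(n+1)) :=
  finSumFinEquiv.trans (finCongr (by omega))

lemma shiftE_inl (n : ℕ) (i : Fin 2) : ((shiftE n) (Sum.inl i)).val = i.val := by
  simp [shiftE]

lemma shiftE_inr (n : ℕ) (k : Fin (2*n)) : ((shiftE n) (Sum.inr k)).val = 2 + k.val := by
  simp [shiftE]; omega

def emb (n : ℕ) (τ : Equiv.Perm (Fin (2*n))) : Equiv.Perm (Fin (2*(n+1))) :=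
  (shiftE n).permCongr (Equiv.sumCongr (Equiv.refl (Fin 2)) τ)

lemma emb_apply_lt (n : ℕ) (τ : Equiv.Perm (Fin (2*n))) (x : Fin (2*(n+1)))
    (hx : x.val < 2) : emb n τ x = x := by
  have hsymm : (shiftE n).symm x = Sum.inl ⟨x.val, hx⟩ := by
    apply (shiftE n).injective
    simp only [Equiv.apply_symm_apply]
    exact Fin.ext (shiftE_inl n ⟨x.val, hx⟩)
  simp [emb, Equiv.permCongr_apply, hsymm]
  exact Fin.ext (shiftE_inl n ⟨x.val, hx⟩)

lemma emb_apply_ge (n : ℕ) (τ : Equiv.Perm (Fin (2*n))) (k : Fin (2*n)) :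
    emb n τ ⟨k.val+2, by have := k.isLt; omega⟩
      = ⟨(τ k).val+2, by have := (τ k).isLt; omega⟩ := by
  have hsymm : (shiftE n).symm ⟨k.val+2, by have := k.isLt; omega⟩ = Sum.inr k := by
    apply (shiftE n).injective
    simp only [Equiv.apply_symm_apply]
    refine (Fin.ext ?_).symm
    rw [shiftE_inr]; simp; omega
  simp [emb, Equiv.permCongr_apply, hsymm]
  exact Fin.ext (by rw [shiftE_inr]; simp; omega)

def up (n : ℕ) (k : Fin (2*n)) : Fin (2*(n+1)) := ⟨k.val+2, by have := k.isLt; omega⟩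

lemma up_val (n : ℕ) (k : Fin (2*n)) : (up n k).val = k.val + 2 := rfl

lemma emb_apply_up (n : ℕ) (τ : Equiv.Perm (Fin (2*n))) (k : Fin (2*n)) :
    emb n τ (up n k) = up n (τ k) := emb_apply_ge n τ k

lemma emb_sign (n : ℕ) (τ : Equiv.Perm (Fin (2*n))) :
    Equiv.Perm.sign (emb n τ) = Equiv.Perm.sign τ := by
  simp [emb, Equiv.Perm.sign_permCongr, Equiv.Perm.sign_sumCongr]

lemma emb_lo (n : ℕ) (τ : Equiv.Perm (Fin (2*n))) (r : Fin (n+1)) (r' : Fin n)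
    (hr : r.val = r'.val + 1) :
    emb n τ (lo (n+1) r)
      = ⟨(τ (lo n r')).val + 2, by have := (τ (lo n r')).isLt; omega⟩ := by
  have h : lo (n+1) r = ⟨(lo n r').val + 2, by have := (lo n r').isLt; omega⟩ := by
    apply Fin.ext; simp [lo]; omega
  rw [h, emb_apply_ge]

lemma emb_hi (n : ℕ) (τ : Equiv.Perm (Fin (2*n))) (r : Fin (n+1)) (r' : Fin n)
    (hr : r.val = r'.val + 1) :
    emb n τ (hi (n+1) r)
      = ⟨(τ (hi n r')).val + 2, by have := (τ (hi n r')).isLt; omega⟩ := by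
  have h : hi (n+1) r = ⟨(hi n r').val + 2, by have := (hi n r').isLt; omega⟩ := by
    apply Fin.ext; simp [hi]; omega
  rw [h, emb_apply_ge]

lemma emb_lo_zero (n : ℕ) (τ : Equiv.Perm (Fin (2*n))) (r : Fin (n+1)) (hr : r.val = 0) :
    emb n τ (lo (n+1) r) = ⟨0, by omega⟩ := by
  have h : lo (n+1) r = ⟨0, by omega⟩ := by apply Fin.ext; show 2 * r.val = 0; omega
  rw [h]; exact emb_apply_lt _ _ _ (by simp)

lemma emb_hi_zero (n : ℕ) (τ : Equiv.Perm (Fin (2*n))) (r : Fin (n+1)) (hr : r.val = 0) :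
    emb n τ (hi (n+1) r) = ⟨1, by omega⟩ := by
  have h : hi (n+1) r = ⟨1, by omega⟩ := by apply Fin.ext; show 2 * r.val + 1 = 1; omega
  rw [h]; exact emb_apply_lt _ _ _ (by simp)

lemma emb_lo_val (n : ℕ) (τ : Equiv.Perm (Fin (2*n))) (r : Fin (n+1)) (r' : Fin n)
    (hr : r.val = r'.val + 1) :
    (emb n τ (lo (n+1) r)).val = (τ (lo n r')).val + 2 := by
  rw [emb_lo n τ r r' hr]

lemma emb_hi_val (n : ℕ) (τ : Equiv.Perm (Fin (2*n))) (r : Fin (n+1)) (r' : Fin n)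
    (hr : r.val = r'.val + 1) :
    (emb n τ (hi (n+1) r)).val = (τ (hi n r')).val + 2 := by
  rw [emb_hi n τ r r' hr]

lemma emb_lo_zero_val (n : ℕ) (τ : Equiv.Perm (Fin (2*n))) (r : Fin (n+1)) (hr : r.val = 0) :
    (emb n τ (lo (n+1) r)).val = 0 := by rw [emb_lo_zero n τ r hr]

lemma emb_hi_zero_val (n : ℕ) (τ : Equiv.Perm (Fin (2*n))) (r : Fin (n+1)) (hr : r.val = 0) :
    (emb n τ (hi (n+1) r)).val = 1 := by rw [emb_hi_zero n τ r hr]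

lemma emb_unmatched (n : ℕ) (τ : Equiv.Perm (Fin (2*n))) (p1 p2 : Fin (2*n))
    (P1 P2 : Fin (2*(n+1))) (hP1 : P1.val = p1.val + 2) (hP2 : P2.val = p2.val + 2) :
    (∀ r : Fin (n+1), ¬(emb n τ (lo (n+1) r) = P1 ∧ emb n τ (hi (n+1) r) = P2))
    ↔ (∀ r : Fin n, ¬(τ (lo n r) = p1 ∧ τ (hi n r) = p2)) := by
  constructor
  · intro h r hc
    apply h ⟨r.val+1, by have := r.isLt; omega⟩
    constructor <;> apply Fin.ext
    · rw [emb_lo_val n τ _ r (by simp), hc.1, hP1]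
    · rw [emb_hi_val n τ _ r (by simp), hc.2, hP2]
  · intro h r hc
    have e1 := congrArg Fin.val hc.1
    have e2 := congrArg Fin.val hc.2
    by_cases hr : r.val = 0
    · rw [emb_lo_zero_val n τ r hr] at e1
      omega
    · rw [emb_lo_val n τ r ⟨r.val-1, by have := r.isLt; omega⟩ (by simp; omega)] at e1
      rw [emb_hi_val n τ r ⟨r.val-1, by have := r.isLt; omega⟩ (by simp; omega)] at e2
      exact h ⟨r.val-1, by have := r.isLt; omega⟩
        ⟨Fin.ext (by omega), Fin.ext (by omega)⟩

lemma emb_mem (n : ℕ) (τ : Equiv.Perm (Fin (2*n))) (hτ : τ ∈ matchingPerms n) :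
    emb n τ ∈ matchingPerms (n+1) := by
  rw [matchingPerms, Finset.mem_filter] at hτ ⊢
  obtain ⟨-, h1, h2⟩ := hτ
  refine ⟨Finset.mem_univ _, ?_, ?_⟩
  · intro i
    by_cases hi0 : i.val = 0
    · rw [emb_lo_zero n τ i hi0, emb_hi_zero n τ i hi0]
      simp [Fin.lt_def]
    · rw [emb_lo n τ i ⟨i.val-1, by have := i.isLt; omega⟩ (by simp; omega),
          emb_hi n τ i ⟨i.val-1, by have := i.isLt; omega⟩ (by simp; omega)]
      have := h1 ⟨i.val-1, by have := i.isLt; omega⟩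
      rw [Fin.lt_def] at this ⊢
      simp at this ⊢; omega
  · intro i j hij
    by_cases hi0 : i.val = 0
    · have hj0 : j.val ≠ 0 := by rw [Fin.lt_def] at hij; omega
      rw [emb_lo_zero n τ i hi0,
          emb_lo n τ j ⟨j.val-1, by have := j.isLt; omega⟩ (by simp; omega)]
      simp [Fin.lt_def]
    · have hj0 : j.val ≠ 0 := by rw [Fin.lt_def] at hij; omega
      rw [emb_lo n τ i ⟨i.val-1, by have := i.isLt; omega⟩ (by simp; omega),
          emb_lo n τ j ⟨j.val-1, by have := j.isLt; omega⟩ (by simp; omega)]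
      have := h2 ⟨i.val-1, by have := i.isLt; omega⟩ ⟨j.val-1, by have := j.isLt; omega⟩
        (by rw [Fin.lt_def] at hij ⊢; simp; omega)
      rw [Fin.lt_def] at this ⊢
      simp at this ⊢; omega

lemma clust_lt (n : ℕ) (Z : ℂ) (z : Fin (2*n) → ℂ) (x : Fin (2*(n+1))) (hx : x.val < 2) :
    clust n Z z x = Z := by simp [clust, hx]

lemma clust_ge (n : ℕ) (Z : ℂ) (z : Fin (2*n) → ℂ) (k : Fin (2*n)) :
    clust n Z z ⟨k.val+2, by have := k.isLt; omega⟩ = z k := by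
  have h : ¬ ((⟨k.val+2, by have := k.isLt; omega⟩ : Fin (2*(n+1))).val < 2) := by simp
  simp only [clust, dif_neg h]
  congr 1

set_option maxHeartbeats 1000000 in
lemma prod_emb (n : ℕ) (Z : ℂ) (z : Fin (2*n) → ℂ) (τ : Equiv.Perm (Fin (2*n))) :
    ∏ p ∈ Finset.univ.filter (fun p : Fin (2*(n+1)) × Fin (2*(n+1)) =>
        p.1 < p.2 ∧ ∀ r : Fin (n+1),
          ¬(emb n τ (lo (n+1) r) = p.1 ∧ emb n τ (hi (n+1) r) = p.2)),
      (clust n Z z p.1 - clust n Z z p.2) ^ 3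
    = (∏ k, (Z - z k) ^ 6) *
      ∏ p ∈ Finset.univ.filter (fun p : Fin (2*n) × Fin (2*n) =>
          p.1 < p.2 ∧ ∀ r : Fin n, ¬(τ (lo n r) = p.1 ∧ τ (hi n r) = p.2)),
        (z p.1 - z p.2) ^ 3 := by
  classical
  rw [← Finset.prod_filter_mul_prod_filter_not
    (Finset.univ.filter (fun p : Fin (2*(n+1)) × Fin (2*(n+1)) =>
        p.1 < p.2 ∧ ∀ r : Fin (n+1),
          ¬(emb n τ (lo (n+1) r) = p.1 ∧ emb n τ (hi (n+1) r) = p.2)))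
    (fun p => p.1.val < 2) (fun p => (clust n Z z p.1 - clust n Z z p.2) ^ 3)]
  congr 1
  · -- low part
    have hset : (Finset.univ.filter (fun p : Fin (2*(n+1)) × Fin (2*(n+1)) =>
        p.1 < p.2 ∧ ∀ r : Fin (n+1),
          ¬(emb n τ (lo (n+1) r) = p.1 ∧ emb n τ (hi (n+1) r) = p.2))).filter
            (fun p => p.1.val < 2)
        = Finset.univ.filter (fun p : Fin (2*(n+1)) × Fin (2*(n+1)) =>
            p.1.val < 2 ∧ 2 ≤ p.2.val) := by
      ext p
      simp only [Finset.mem_filter, Finset.mem_univ, true_and]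
      constructor
      · rintro ⟨⟨hlt, hun⟩, h2⟩
        refine ⟨h2, ?_⟩
        by_contra hp2
        push_neg at hp2
        rw [Fin.lt_def] at hlt
        refine hun ⟨0, by omega⟩ ⟨?_, ?_⟩ <;> apply Fin.ext
        · rw [emb_lo_zero_val n τ _ rfl]; omega
        · rw [emb_hi_zero_val n τ _ rfl]; omega
      · rintro ⟨h1, h2⟩
        refine ⟨⟨by rw [Fin.lt_def]; omega, ?_⟩, h1⟩
        rintro r ⟨hr1, hr2⟩
        have e2 := congrArg Fin.val hr2
        by_cases hr : r.val = 0
        · rw [emb_hi_zero_val n τ r hr] at e2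
          omega
        · have e1 := congrArg Fin.val hr1
          rw [emb_lo_val n τ r ⟨r.val-1, by have := r.isLt; omega⟩ (by simp; omega)] at e1
          omega
    rw [hset]
    have hB : ∏ p ∈ Finset.univ.filter (fun p : Fin (2*(n+1)) × Fin (2*(n+1)) =>
        p.1.val < 2 ∧ 2 ≤ p.2.val), (clust n Z z p.1 - clust n Z z p.2) ^ 3
        = ∏ a : Fin 2 × Fin (2*n), (Z - z a.2) ^ 3 := by
      refine (Finset.prod_bij (fun (a : Fin 2 × Fin (2*n)) _ =>
        ((⟨a.1.val, by have := a.1.isLt; omega⟩ : Fin (2*(n+1))),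
         (⟨a.2.val+2, by have := a.2.isLt; omega⟩ : Fin (2*(n+1))))) ?_ ?_ ?_ ?_).symm
      · intro a _
        simp only [Finset.mem_filter, Finset.mem_univ, true_and]
        exact ⟨a.1.isLt, by simp⟩
      · intro a _ b _ hab
        have h1 := congrArg (fun q : Fin (2*(n+1)) × Fin (2*(n+1)) => q.1.val) hab
        have h2 := congrArg (fun q : Fin (2*(n+1)) × Fin (2*(n+1)) => q.2.val) hab
        simp at h1 h2
        exact Prod.ext (Fin.ext h1) (Fin.ext (by omega))
      · intro p hp
        simp only [Finset.mem_filter, Finset.mem_univ, true_and] at hp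
        refine ⟨(⟨p.1.val, hp.1⟩, ⟨p.2.val - 2, by have := p.2.isLt; omega⟩),
          Finset.mem_univ _, ?_⟩
        refine Prod.ext (Fin.ext ?_) (Fin.ext ?_) <;> simp <;> omega
      · intro a _
        rw [clust_lt n Z z _ (by simpa using a.1.isLt), clust_ge n Z z a.2]
    rw [hB]
    rw [Fintype.prod_prod_type]
    show (∏ _x : Fin 2, ∏ y : Fin (2*n), (Z - z y) ^ 3) = _
    rw [Finset.prod_const, Finset.card_univ, Fintype.card_fin, ← Finset.prod_pow]
    exact Finset.prod_congr rfl (fun k _ => by ring)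
  · -- high part
    refine (Finset.prod_bij (fun (q : Fin (2*n) × Fin (2*n)) _ =>
      ((⟨q.1.val+2, by have := q.1.isLt; omega⟩ : Fin (2*(n+1))),
       (⟨q.2.val+2, by have := q.2.isLt; omega⟩ : Fin (2*(n+1))))) ?_ ?_ ?_ ?_).symm
    · intro q hq
      simp only [Finset.mem_filter, Finset.mem_univ, true_and] at hq ⊢
      refine ⟨⟨by rw [Fin.lt_def] at hq ⊢; simp; omega, ?_⟩, by simp⟩
      exact (emb_unmatched n τ q.1 q.2 _ _ (by simp) (by simp)).mpr hq.2
    · intro a _ b _ hab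
      have h1 := congrArg (fun q : Fin (2*(n+1)) × Fin (2*(n+1)) => q.1.val) hab
      have h2 := congrArg (fun q : Fin (2*(n+1)) × Fin (2*(n+1)) => q.2.val) hab
      simp at h1 h2
      exact Prod.ext (Fin.ext (by omega)) (Fin.ext (by omega))
    · intro p hp
      simp only [Finset.mem_filter, Finset.mem_univ, true_and] at hp
      obtain ⟨⟨hlt, hun⟩, hp1⟩ := hp
      rw [Fin.lt_def] at hlt
      have hp1' : 2 ≤ p.1.val := by omega
      have hp2' : 2 ≤ p.2.val := by omega
      refine ⟨(⟨p.1.val - 2, by have := p.1.isLt; omega⟩,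
               ⟨p.2.val - 2, by have := p.2.isLt; omega⟩), ?_, ?_⟩
      · simp only [Finset.mem_filter, Finset.mem_univ, true_and]
        refine ⟨by rw [Fin.lt_def]; simp; omega, ?_⟩
        exact (emb_unmatched n τ _ _ p.1 p.2 (by simp; omega) (by simp; omega)).mp hun
      · refine Prod.ext (Fin.ext ?_) (Fin.ext ?_) <;> simp <;> omega
    · intro q _
      rw [clust_ge n Z z q.1, clust_ge n Z z q.2]


set_option maxHeartbeats 1000000 in
/-- Clustering property: `Q_{2n}^n(Z, Z, z₃, …, z_{2n}) = ∏_k (Z - z_k)^6 ⋅ Q_{2n-2}^{n-1}`. -/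
theorem Qn_clustering (n : ℕ) (Z : ℂ) (z : Fin (2 * n) → ℂ) :
    Qn (n + 1) (clust n Z z) = (∏ k, (Z - z k) ^ 6) * Qn n z := by
  classical
  unfold Qn
  rw [Finset.mul_sum]
  set S : Finset (Equiv.Perm (Fin (2*(n+1)))) := (matchingPerms (n+1)).filter
    (fun σ => σ ⟨0, by omega⟩ = ⟨0, by omega⟩ ∧ σ ⟨1, by omega⟩ = ⟨1, by omega⟩) with hS
  have hsub : S ⊆ matchingPerms (n+1) := Finset.filter_subset _ _
  have hzero : ∀ σ ∈ matchingPerms (n+1), σ ∉ S →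
      ((Equiv.Perm.sign σ : ℤ) : ℂ) *
        ∏ p ∈ Finset.univ.filter (fun p : Fin (2*(n+1)) × Fin (2*(n+1)) =>
            p.1 < p.2 ∧ ∀ r : Fin (n+1), ¬(σ (lo (n+1) r) = p.1 ∧ σ (hi (n+1) r) = p.2)),
          (clust n Z z p.1 - clust n Z z p.2) ^ 3 = 0 := by
    intro σ hσ hσS
    have hfix : ¬ (σ ⟨0, by omega⟩ = ⟨0, by omega⟩ ∧ σ ⟨1, by omega⟩ = ⟨1, by omega⟩) := by
      intro hc
      exact hσS (by rw [hS]; exact Finset.mem_filter.mpr ⟨hσ, hc⟩)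
    have hmem : ((⟨0, by omega⟩ : Fin (2*(n+1))), (⟨1, by omega⟩ : Fin (2*(n+1)))) ∈
        Finset.univ.filter (fun p : Fin (2*(n+1)) × Fin (2*(n+1)) =>
            p.1 < p.2 ∧ ∀ r : Fin (n+1), ¬(σ (lo (n+1) r) = p.1 ∧ σ (hi (n+1) r) = p.2)) := by
      simp only [Finset.mem_filter, Finset.mem_univ, true_and]
      refine ⟨by rw [Fin.lt_def]; simp, ?_⟩
      rintro r ⟨h1, h2⟩
      rw [matchingPerms, Finset.mem_filter] at hσ
      obtain ⟨-, -, hmono⟩ := hσ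
      by_cases hr : r.val = 0
      · apply hfix
        have hl : lo (n+1) r = ⟨0, by omega⟩ := Fin.ext (by show 2 * r.val = 0; omega)
        have hh : hi (n+1) r = ⟨1, by omega⟩ := Fin.ext (by show 2 * r.val + 1 = 1; omega)
        rw [hl] at h1; rw [hh] at h2
        exact ⟨h1, h2⟩
      · have := hmono ⟨0, by omega⟩ r (by rw [Fin.lt_def]; show 0 < r.val; omega)
        rw [h1, Fin.lt_def] at this
        simp at this
    apply mul_eq_zero_of_right
    apply Finset.prod_eq_zero hmem
    rw [clust_lt n Z z _ (by simp), clust_lt n Z z _ (by simp)]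
    simp
  rw [← Finset.sum_subset hsub hzero]
  refine (Finset.sum_bij
    (fun (τ : Equiv.Perm (Fin (2*n))) (_ : τ ∈ matchingPerms n) => emb n τ)
    ?_ ?_ ?_ ?_).symm
  · -- maps into S
    intro τ hτ
    rw [hS, Finset.mem_filter]
    exact ⟨emb_mem n τ hτ, emb_apply_lt n τ _ (by simp), emb_apply_lt n τ _ (by simp)⟩
  · -- injective
    intro a _ b _ hab
    ext k
    have h := congrArg
      (fun σ : Equiv.Perm (Fin (2*(n+1))) => σ ⟨k.val+2, by have := k.isLt; omega⟩) hab
    rw [emb_apply_ge, emb_apply_ge] at h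
    have h2 := congrArg Fin.val h
    simp at h2
    exact h2
  · -- surjective
    intro σ hσ
    rw [hS, Finset.mem_filter] at hσ
    obtain ⟨hσm, h0, h1⟩ := hσ
    have hge : ∀ x : Fin (2*(n+1)), 2 ≤ x.val → 2 ≤ (σ x).val := by
      intro x hx
      by_contra hlt
      push_neg at hlt
      have h01 : (σ x).val = 0 ∨ (σ x).val = 1 := by omega
      rcases h01 with h' | h'
      · have : σ x = σ ⟨0, by omega⟩ := by rw [h0]; exact Fin.ext (by simpa using h')
        have := σ.injective this
        rw [this] at hx; simp at hx
      · have : σ x = σ ⟨1, by omega⟩ := by rw [h1]; exact Fin.ext (by simpa using h')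
        have := σ.injective this
        rw [this] at hx; simp at hx
    have hge' : ∀ x : Fin (2*(n+1)), 2 ≤ x.val → 2 ≤ (σ.symm x).val := by
      intro x hx
      by_contra hlt
      push_neg at hlt
      have h01 : (σ.symm x).val = 0 ∨ (σ.symm x).val = 1 := by omega
      rcases h01 with h' | h'
      · have hx0 : σ.symm x = ⟨0, by omega⟩ := Fin.ext (by simpa using h')
        have : x = σ ⟨0, by omega⟩ := by rw [← hx0]; simp
        rw [this, h0] at hx; simp at hx
      · have hx0 : σ.symm x = ⟨1, by omega⟩ := Fin.ext (by simpa using h')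
        have : x = σ ⟨1, by omega⟩ := by rw [← hx0]; simp
        rw [this, h1] at hx; simp at hx
    have hup2 : ∀ k : Fin (2*n), 2 ≤ (up n k).val := by
      intro k; rw [up_val]; omega
    have hb : ∀ k : Fin (2*n), (σ (up n k)).val - 2 < 2*n := by
      intro k; have := (σ (up n k)).isLt; have := hge (up n k) (hup2 k); omega
    have hb' : ∀ k : Fin (2*n), (σ.symm (up n k)).val - 2 < 2*n := by
      intro k; have := (σ.symm (up n k)).isLt; have := hge' (up n k) (hup2 k); omega
    set τ : Equiv.Perm (Fin (2*n)) :=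
      { toFun := fun k => ⟨(σ (up n k)).val - 2, hb k⟩
        invFun := fun k => ⟨(σ.symm (up n k)).val - 2, hb' k⟩
        left_inv := by
          intro k
          apply Fin.ext
          show (σ.symm (up n ⟨(σ (up n k)).val - 2, hb k⟩)).val - 2 = k.val
          have h2 := hge (up n k) (hup2 k)
          have e : up n ⟨(σ (up n k)).val - 2, hb k⟩ = σ (up n k) :=
            Fin.ext (by rw [up_val]; exact Nat.sub_add_cancel h2)
          rw [e, Equiv.symm_apply_apply, up_val]
          omega
        right_inv := by
          intro k
          apply Fin.ext
          show (σ (up n ⟨(σ.symm (up n k)).val - 2, hb' k⟩)).val - 2 = k.val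
          have h2 := hge' (up n k) (hup2 k)
          have e : up n ⟨(σ.symm (up n k)).val - 2, hb' k⟩ = σ.symm (up n k) :=
            Fin.ext (by rw [up_val]; exact Nat.sub_add_cancel h2)
          rw [e, Equiv.apply_symm_apply, up_val]
          omega } with hτdef
    have hτval : ∀ k : Fin (2*n), (τ k).val = (σ (up n k)).val - 2 := fun k => rfl
    have hemb : emb n τ = σ := by
      apply Equiv.ext
      intro x
      by_cases hx : x.val < 2
      · rw [emb_apply_lt n τ x hx]
        have h01 : x.val = 0 ∨ x.val = 1 := by omega
        rcases h01 with h' | h'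
        · have hx0 : x = ⟨0, by omega⟩ := Fin.ext h'
          rw [hx0, h0]
        · have hx0 : x = ⟨1, by omega⟩ := Fin.ext h'
          rw [hx0, h1]
      · push_neg at hx
        have hxlt : x.val - 2 < 2*n := by have := x.isLt; omega
        have hxe : x = up n ⟨x.val - 2, hxlt⟩ := Fin.ext (by rw [up_val]; simp; omega)
        rw [hxe, emb_apply_up]
        apply Fin.ext
        rw [up_val, hτval]
        have hg := hge (up n ⟨x.val - 2, hxlt⟩) (hup2 _)
        omega
    have hmem : τ ∈ matchingPerms n := by
      rw [matchingPerms, Finset.mem_filter] at hσm ⊢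
      obtain ⟨-, hA, hB⟩ := hσm
      refine ⟨Finset.mem_univ _, ?_, ?_⟩
      · intro i
        have hc := hA ⟨i.val+1, by have := i.isLt; omega⟩
        rw [← hemb] at hc
        rw [Fin.lt_def] at hc ⊢
        rw [emb_lo_val n τ _ i rfl, emb_hi_val n τ _ i rfl] at hc
        omega
      · intro i j hij
        have hc := hB ⟨i.val+1, by have := i.isLt; omega⟩ ⟨j.val+1, by have := j.isLt; omega⟩
          (by rw [Fin.lt_def] at hij ⊢; simp; omega)
        rw [← hemb] at hc
        rw [Fin.lt_def] at hc ⊢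
        rw [emb_lo_val n τ _ i rfl, emb_lo_val n τ _ j rfl] at hc
        omega
    exact ⟨τ, hmem, hemb⟩
  · -- value equality
    intro τ hτ
    rw [emb_sign, prod_emb]
    ring
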